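/- If n has only digits 0 and 1 in its base-3 expansion, then in the ring (ℤ/3[y]/(y^{n+1})) ⊗_{ℤ/3} (ℤ/3[y]/(y^{n+1})) the element (y⊗1 - 1⊗y)^{2n} is nonzero. -/

import Mathlib

open TensorProduct Polynomial

private lemma aux_mod_lt :
    ∀ n : ℕ, (∀ d ∈ Nat.digits 3 n, d = 0 ∨ d = 1) → ∀ i, 2 * (n % 3 ^ i) < 3 ^ i := by
  intro n
  induction n using Nat.strong_induction_on with
  | _ n ih =>
    intro hd i
    rcases Nat.eq_zero_or_pos n with rfl | hn
    · simpa using Nat.pos_pow_of_pos i three_pos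
    cases i with
    | zero => simp [Nat.mod_one]
    | succ j =>
      have hdig : Nat.digits 3 n = n % 3 :: Nat.digits 3 (n / 3) :=
        Nat.digits_def' (by norm_num) hn
      have h1 : n % 3 = 0 ∨ n % 3 = 1 := hd _ (by rw [hdig]; exact List.mem_cons_self)
      have h2 : ∀ d ∈ Nat.digits 3 (n / 3), d = 0 ∨ d = 1 := fun d hdm =>
        hd d (by rw [hdig]; exact List.mem_cons_of_mem _ hdm)
      have ihj := ih (n / 3) (Nat.div_lt_self hn (by norm_num)) h2 j
      have hmod : n % 3 ^ (j + 1) = n % 3 + 3 * (n / 3 % 3 ^ j) := by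
        rw [pow_succ, mul_comm (3 ^ j) 3]
        exact Nat.mod_mul
      rw [hmod, pow_succ]
      omega

private lemma aux_choose_not_dvd (n : ℕ) (hd : ∀ d ∈ Nat.digits 3 n, d = 0 ∨ d = 1) :
    ¬ (3 ∣ Nat.choose (2 * n) n) := by
  rw [← emultiplicity_eq_zero]
  have h := Nat.Prime.emultiplicity_choose' (p := 3) (n := n) (k := n)
    Nat.prime_three (b := Nat.log 3 (n + n) + 1) (Nat.lt_succ_self _)
  rw [show 2 * n = n + n by ring]
  rw [h]
  have : Finset.filter (fun i => 3 ^ i ≤ n % 3 ^ i + n % 3 ^ i)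
      (Finset.Ico 1 (Nat.log 3 (n + n) + 1)) = ∅ := by
    apply Finset.filter_eq_empty_iff.mpr
    intro i _
    have := aux_mod_lt n hd i
    omega
  rw [this]
  simp

set_option synthInstance.maxHeartbeats 1000000 in
/-- If `n` has only digits `0` and `1` in its base-3 expansion, then in
`(ℤ/3[y]/(y^{n+1})) ⊗_{ℤ/3} (ℤ/3[y]/(y^{n+1}))` the element `(y⊗1 - 1⊗y)^{2n}` is
nonzero. -/
theorem ybar_power_ne_zero_of_small_digits (n : ℕ) (hn : 0 < n)
    (hd : ∀ d ∈ Nat.digits 3 n, d = 0 ∨ d = 1) :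
    let R := Polynomial (ZMod 3) ⧸ Ideal.span {(X : Polynomial (ZMod 3)) ^ (n + 1)}
    let y : R := Ideal.Quotient.mk _ X
    (y ⊗ₜ[ZMod 3] (1 : R) - (1 : R) ⊗ₜ[ZMod 3] y) ^ (2 * n) ≠ 0 := by
  intro R y
  have hfne : (X : Polynomial (ZMod 3)) ^ (n + 1) ≠ 0 := pow_ne_zero _ X_ne_zero
  set f : Polynomial (ZMod 3) := X ^ (n + 1) with hf
  show ((AdjoinRoot.root f) ⊗ₜ[ZMod 3] (1 : AdjoinRoot f)
      - (1 : AdjoinRoot f) ⊗ₜ[ZMod 3] (AdjoinRoot.root f)) ^ (2 * n) ≠ 0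
  set r : AdjoinRoot f := AdjoinRoot.root f with hr
  have hr0 : r ^ (n + 1) = 0 := by
    rw [hr, AdjoinRoot.root, ← map_pow, ← hf, AdjoinRoot.mk_self]
  have hrpow : ∀ m : ℕ, n < m → r ^ m = 0 := by
    intro m hm
    calc r ^ m = r ^ (n + 1) * r ^ (m - (n + 1)) := by rw [← pow_add]; congr 1; omega
    _ = 0 := by rw [hr0, zero_mul]
  -- expand the power
  have hexp : ((r ⊗ₜ[ZMod 3] (1 : AdjoinRoot f) - (1 : AdjoinRoot f) ⊗ₜ[ZMod 3] r) ^ (2 * n))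
      = ((-1 : ZMod 3) ^ (n + 2 * n) * (Nat.choose (2 * n) n : ZMod 3))
        • ((r ^ n) ⊗ₜ[ZMod 3] (r ^ n)) := by
    rw [sub_pow]
    rw [Finset.sum_eq_single n]
    · have hmul : (r ^ n) ⊗ₜ[ZMod 3] (1 : AdjoinRoot f) * (1 : AdjoinRoot f) ⊗ₜ[ZMod 3] (r ^ n)
          = (r ^ n) ⊗ₜ[ZMod 3] (r ^ n) := by
        rw [Algebra.TensorProduct.tmul_mul_tmul, mul_one, one_mul]
      rw [show 2 * n - n = n from by omega, Algebra.TensorProduct.tmul_pow,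
        Algebra.TensorProduct.tmul_pow, one_pow,
        Algebra.smul_def, map_mul, map_pow, map_neg, map_one, map_natCast, ← hmul]
      ring
    · intro m _ hmne
      rcases Nat.lt_or_ge m n with hml | hmg
      · have h0 : r ^ (2 * n - m) = 0 := hrpow _ (by omega)
        simp [Algebra.TensorProduct.tmul_pow, h0]
      · have h0 : r ^ m = 0 := hrpow _ (by omega)
        simp [Algebra.TensorProduct.tmul_pow, h0]
    · intro hnm
      exact absurd (Finset.mem_range.mpr (by omega)) hnm
  rw [hexp]
  -- the scalar is nonzero
  have hc : ((-1 : ZMod 3) ^ (n + 2 * n) * (Nat.choose (2 * n) n : ZMod 3)) ≠ 0 := by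
    apply mul_ne_zero
    · exact pow_ne_zero _ (by decide)
    · rw [Ne, ZMod.natCast_eq_zero_iff]
      exact aux_choose_not_dvd n hd
  -- r^n ⊗ r^n is a basis vector
  have hv : (r ^ n) ⊗ₜ[ZMod 3] (r ^ n) ≠ 0 := by
    set pb : PowerBasis (ZMod 3) (AdjoinRoot f) := AdjoinRoot.powerBasis hfne with hpb
    have hdim : pb.dim = n + 1 := by
      rw [hpb, AdjoinRoot.powerBasis_dim, hf, natDegree_X_pow]
    set i : Fin pb.dim := ⟨n, by omega⟩ with hi
    have hbi : pb.basis i = r ^ n := by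
      rw [pb.basis_eq_pow i]
      show pb.gen ^ n = r ^ n
      rw [hpb, AdjoinRoot.powerBasis_gen]
    have := (pb.basis.tensorProduct pb.basis).ne_zero (i, i)
    rwa [Module.Basis.tensorProduct_apply, hbi] at this
  exact smul_ne_zero hc hv
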